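/- Let p ≥ 3 be a prime, n ≥ 1, and let H be a closed subgroup of GL_d(ℤ_p). Suppose H contains, for every j ≥ n, a set of representatives of K_j/K_{j+1} modulo p^(j+1) (i.e. the reduction of H mod p^(j+1) contains the image of K_j). Then H contains the full principal congruence subgroup K_n. -/
import Mathlib


open Matrix Filter Topology

/-- The `j`-th principal congruence subgroup of `GL d ℤ_[p]`. -/
def congrSubgroup (p : ℕ) [Fact p.Prime] (d j : ℕ) : Subgroup (GL (Fin d) ℤ_[p]) where
  carrier := {M | ∀ i k, (p : ℤ_[p]) ^ j ∣ ((M : Matrix (Fin d) (Fin d) ℤ_[p]) - 1) i k}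
  one_mem' := by
    intro i k
    simp
  mul_mem' := by
    intro A B hA hB i k
    have key : ((A * B : GL (Fin d) ℤ_[p]) : Matrix (Fin d) (Fin d) ℤ_[p]) - 1
        = ((A : Matrix (Fin d) (Fin d) ℤ_[p]) - 1) * (B : Matrix (Fin d) (Fin d) ℤ_[p])
          + ((B : Matrix (Fin d) (Fin d) ℤ_[p]) - 1) := by
      rw [Units.val_mul]
      noncomm_ring
    rw [key, Matrix.add_apply, Matrix.mul_apply]
    exact dvd_add (Finset.dvd_sum fun l _ => (hA i l).mul_right _) (hB i k)
  inv_mem' := by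
    intro A hA i k
    have h1 : ((A⁻¹ : GL (Fin d) ℤ_[p]) : Matrix (Fin d) (Fin d) ℤ_[p])
        * (A : Matrix (Fin d) (Fin d) ℤ_[p]) = 1 := by
      rw [← Units.val_mul, inv_mul_cancel, Units.val_one]
    have key : ((A⁻¹ : GL (Fin d) ℤ_[p]) : Matrix (Fin d) (Fin d) ℤ_[p]) - 1
        = ((A⁻¹ : GL (Fin d) ℤ_[p]) : Matrix (Fin d) (Fin d) ℤ_[p])
          * ((1 : Matrix (Fin d) (Fin d) ℤ_[p]) - (A : Matrix (Fin d) (Fin d) ℤ_[p])) := by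
      rw [Matrix.mul_sub, Matrix.mul_one, h1]
    rw [key, Matrix.mul_apply]
    refine Finset.dvd_sum fun l _ => Dvd.dvd.mul_left ?_ _
    have : ((1 : Matrix (Fin d) (Fin d) ℤ_[p]) - (A : Matrix (Fin d) (Fin d) ℤ_[p])) l k
        = -(((A : Matrix (Fin d) (Fin d) ℤ_[p]) - 1) l k) := by
      simp [Matrix.sub_apply]
    rw [this]
    exact (hA l k).neg_right

instance congrSubgroup_normal (p : ℕ) [Fact p.Prime] (d j : ℕ) :
    (congrSubgroup p d j).Normal := by
  constructor
  intro M hM g i k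
  have hgg : (g : Matrix (Fin d) (Fin d) ℤ_[p]) * ((g⁻¹ : GL (Fin d) ℤ_[p]) : Matrix (Fin d) (Fin d) ℤ_[p]) = 1 := by
    rw [← Units.val_mul, mul_inv_cancel, Units.val_one]
  have key : ((g * M * g⁻¹ : GL (Fin d) ℤ_[p]) : Matrix (Fin d) (Fin d) ℤ_[p]) - 1
      = (g : Matrix (Fin d) (Fin d) ℤ_[p]) * (((M : Matrix (Fin d) (Fin d) ℤ_[p]) - 1))
        * ((g⁻¹ : GL (Fin d) ℤ_[p]) : Matrix (Fin d) (Fin d) ℤ_[p]) := by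
    rw [Units.val_mul, Units.val_mul, Matrix.mul_sub, Matrix.mul_one, Matrix.sub_mul, hgg]
  rw [key, Matrix.mul_apply]
  refine Finset.dvd_sum fun l _ => Dvd.dvd.mul_right ?_ _
  rw [Matrix.mul_apply]
  exact Finset.dvd_sum fun m _ => (hM m l).mul_left _

/-- Reduction `GL_d(ℤ_p) → GL_d(ℤ/p^k)` induced by `ℤ_p → ℤ/p^k`. -/
noncomputable def glRed (p : ℕ) [Fact p.Prime] (d k : ℕ) : GL (Fin d) ℤ_[p] →* GL (Fin d) (ZMod (p ^ k)) :=
  Matrix.GeneralLinearGroup.map (PadicInt.toZModPow k)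

/-- Left multiplication by an element of the congruence subgroup perturbs entries by `p^j`. -/
lemma aux_mul_left (p : ℕ) [Fact p.Prime] (d j : ℕ) (B C : GL (Fin d) ℤ_[p])
    (hB : B ∈ congrSubgroup p d j) (i k : Fin d) :
    (p : ℤ_[p]) ^ j ∣ (((B * C : GL (Fin d) ℤ_[p]) : Matrix (Fin d) (Fin d) ℤ_[p])
      - (C : Matrix (Fin d) (Fin d) ℤ_[p])) i k := by
  have key : ((B * C : GL (Fin d) ℤ_[p]) : Matrix (Fin d) (Fin d) ℤ_[p])
      - (C : Matrix (Fin d) (Fin d) ℤ_[p])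
      = ((B : Matrix (Fin d) (Fin d) ℤ_[p]) - 1) * (C : Matrix (Fin d) (Fin d) ℤ_[p]) := by
    rw [Units.val_mul]; noncomm_ring
  rw [key, Matrix.mul_apply]
  exact Finset.dvd_sum fun l _ => (hB i l).mul_right _

/-- Right multiplication by an element of the congruence subgroup perturbs entries by `p^j`. -/
lemma aux_mul_right (p : ℕ) [Fact p.Prime] (d j : ℕ) (B C : GL (Fin d) ℤ_[p])
    (hB : B ∈ congrSubgroup p d j) (i k : Fin d) :
    (p : ℤ_[p]) ^ j ∣ (((C * B : GL (Fin d) ℤ_[p]) : Matrix (Fin d) (Fin d) ℤ_[p])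
      - (C : Matrix (Fin d) (Fin d) ℤ_[p])) i k := by
  have key : ((C * B : GL (Fin d) ℤ_[p]) : Matrix (Fin d) (Fin d) ℤ_[p])
      - (C : Matrix (Fin d) (Fin d) ℤ_[p])
      = (C : Matrix (Fin d) (Fin d) ℤ_[p]) * ((B : Matrix (Fin d) (Fin d) ℤ_[p]) - 1) := by
    rw [Units.val_mul]; noncomm_ring
  rw [key, Matrix.mul_apply]
  exact Finset.dvd_sum fun l _ => (hB l k).mul_left _

/-- Norm bound from divisibility. -/
lemma aux_norm_le (p : ℕ) [Fact p.Prime] (j : ℕ) (x : ℤ_[p]) (hx : (p : ℤ_[p]) ^ j ∣ x) :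
    ‖x‖ ≤ ((p : ℝ)⁻¹) ^ j := by
  have h1 : ‖x‖ ≤ (p : ℝ) ^ (-(j : ℤ)) :=
    (PadicInt.norm_le_pow_iff_mem_span_pow x j).2 (Ideal.mem_span_singleton.2 hx)
  rwa [_root_.zpow_neg, zpow_natCast, ← inv_pow] at h1

/-- Let `p ≥ 3` be prime, `n ≥ 1`, and `H` a closed subgroup of `GL_d(ℤ_p)`.
If, for every `j ≥ n`, the reduction of `H` mod `p^(j+1)` contains the image of the principal
congruence subgroup `K_j`, then `H` contains `K_n`. -/
theorem closed_subgroup_contains_congruence (p d n : ℕ) [Fact p.Prime] (hp : 3 ≤ p)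
    (hn : 1 ≤ n) (H : Subgroup (GL (Fin d) ℤ_[p]))
    (hclosed : IsClosed (H : Set (GL (Fin d) ℤ_[p])))
    (hrep : ∀ j, n ≤ j →
      Subgroup.map (glRed p d (j + 1)) (congrSubgroup p d j) ≤
        Subgroup.map (glRed p d (j + 1)) H) :
    congrSubgroup p d n ≤ H := by
  intro M hM
  -- step: approximate any element of K_j by an element of H to one higher level
  have step : ∀ j, n ≤ j → ∀ A : GL (Fin d) ℤ_[p], A ∈ congrSubgroup p d j →
      ∃ h ∈ H, A * h⁻¹ ∈ congrSubgroup p d (j + 1) := by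
    intro j hj A hA
    obtain ⟨h, hhH, hred⟩ := hrep j hj ⟨A, hA, rfl⟩
    simp only [glRed] at hred
    refine ⟨h, hhH, ?_⟩
    have hdvd : ∀ i k : Fin d, (p : ℤ_[p]) ^ (j+1)
        ∣ ((A : Matrix (Fin d) (Fin d) ℤ_[p]) i k - (h : Matrix (Fin d) (Fin d) ℤ_[p]) i k) := by
      intro i k
      have h1 : PadicInt.toZModPow (j+1) ((A : Matrix (Fin d) (Fin d) ℤ_[p]) i k)
          = PadicInt.toZModPow (j+1) ((h : Matrix (Fin d) (Fin d) ℤ_[p]) i k) := by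
        rw [← Matrix.GeneralLinearGroup.map_apply, ← Matrix.GeneralLinearGroup.map_apply, hred]
      have h2 : ((A : Matrix (Fin d) (Fin d) ℤ_[p]) i k - (h : Matrix (Fin d) (Fin d) ℤ_[p]) i k)
          ∈ RingHom.ker (PadicInt.toZModPow (p := p) (j+1)) := by
        rw [RingHom.mem_ker, map_sub, h1, sub_self]
      rwa [PadicInt.ker_toZModPow, Ideal.mem_span_singleton] at h2
    intro i k
    have hinv : (h : Matrix (Fin d) (Fin d) ℤ_[p])
        * ((h⁻¹ : GL (Fin d) ℤ_[p]) : Matrix (Fin d) (Fin d) ℤ_[p]) = 1 := by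
      rw [← Units.val_mul, mul_inv_cancel, Units.val_one]
    have key : ((A * h⁻¹ : GL (Fin d) ℤ_[p]) : Matrix (Fin d) (Fin d) ℤ_[p]) - 1
        = ((A : Matrix (Fin d) (Fin d) ℤ_[p]) - (h : Matrix (Fin d) (Fin d) ℤ_[p]))
          * ((h⁻¹ : GL (Fin d) ℤ_[p]) : Matrix (Fin d) (Fin d) ℤ_[p]) := by
      rw [Units.val_mul, Matrix.sub_mul, hinv]
    rw [key, Matrix.mul_apply]
    refine Finset.dvd_sum fun l _ => Dvd.dvd.mul_right ?_ _
    simpa [Matrix.sub_apply] using hdvd i l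
  -- build the approximating sequence
  have key : ∀ m : ℕ, ∃ g, g ∈ H ∧ M * g⁻¹ ∈ congrSubgroup p d (n + m) := by
    intro m
    induction m with
    | zero => exact ⟨1, one_mem H, by simpa using hM⟩
    | succ m ih =>
      obtain ⟨g, hg, hA⟩ := ih
      obtain ⟨h, hh, hstep⟩ := step (n + m) (Nat.le_add_right n m) (M * g⁻¹) hA
      refine ⟨h * g, mul_mem hh hg, ?_⟩
      have e : M * (h * g)⁻¹ = (M * g⁻¹) * h⁻¹ := by group
      rw [e]
      exact hstep
  choose g hgH hgK using key
  -- squeeze lemma for entries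
  have hsq : ∀ (f : ℕ → ℤ_[p]) (a : ℤ_[p]),
      (∀ m, ‖f m - a‖ ≤ ((p : ℝ)⁻¹) ^ (n + m)) → Tendsto f atTop (𝓝 a) := by
    intro f a hf
    rw [tendsto_iff_norm_sub_tendsto_zero]
    refine squeeze_zero (fun m => norm_nonneg _) hf ?_
    have hp1 : (1 : ℝ) < (p : ℝ) := by exact_mod_cast (Fact.out : p.Prime).one_lt
    have h0 : 0 ≤ (p : ℝ)⁻¹ := inv_nonneg.2 (by positivity)
    have h1 : (p : ℝ)⁻¹ < 1 := inv_lt_one_of_one_lt₀ hp1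
    have ht := (tendsto_pow_atTop_nhds_zero_of_lt_one h0 h1).const_mul (((p : ℝ)⁻¹) ^ n)
    simpa [pow_add] using ht
  -- entrywise bounds
  have hb1 : ∀ m i k, ‖((g m : Matrix (Fin d) (Fin d) ℤ_[p])
      - (M : Matrix (Fin d) (Fin d) ℤ_[p])) i k‖ ≤ ((p : ℝ)⁻¹) ^ (n + m) := by
    intro m i k
    have hBm : (M * (g m)⁻¹)⁻¹ ∈ congrSubgroup p d (n + m) := inv_mem (hgK m)
    have e : (M * (g m)⁻¹)⁻¹ * M = g m := by group
    have := aux_mul_left p d (n + m) (M * (g m)⁻¹)⁻¹ M hBm i k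
    rw [e] at this
    exact aux_norm_le p (n + m) _ this
  have hb2 : ∀ m i k, ‖(((g m)⁻¹ : GL (Fin d) ℤ_[p]) : Matrix (Fin d) (Fin d) ℤ_[p]) i k
      - ((M⁻¹ : GL (Fin d) ℤ_[p]) : Matrix (Fin d) (Fin d) ℤ_[p]) i k‖
        ≤ ((p : ℝ)⁻¹) ^ (n + m) := by
    intro m i k
    have e : M⁻¹ * (M * (g m)⁻¹) = (g m)⁻¹ := by group
    have := aux_mul_right p d (n + m) (M * (g m)⁻¹) M⁻¹ (hgK m) i k
    rw [e] at this
    simpa [Matrix.sub_apply] using aux_norm_le p (n + m) _ this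
  -- convergence of the matrices
  have hT1 : Tendsto (fun m => ((g m : GL (Fin d) ℤ_[p]) : Matrix (Fin d) (Fin d) ℤ_[p]))
      atTop (𝓝 (M : Matrix (Fin d) (Fin d) ℤ_[p])) := by
    refine tendsto_pi_nhds.2 fun i => tendsto_pi_nhds.2 fun k => hsq _ _ fun m => ?_
    simpa [Matrix.sub_apply] using hb1 m i k
  have hT2 : Tendsto (fun m => (((g m)⁻¹ : GL (Fin d) ℤ_[p]) : Matrix (Fin d) (Fin d) ℤ_[p]))
      atTop (𝓝 ((M⁻¹ : GL (Fin d) ℤ_[p]) : Matrix (Fin d) (Fin d) ℤ_[p])) := by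
    refine tendsto_pi_nhds.2 fun i => tendsto_pi_nhds.2 fun k => hsq _ _ fun m => ?_
    exact hb2 m i k
  -- convergence in GL
  have hT : Tendsto g atTop (𝓝 M) := by
    rw [Units.isEmbedding_embedProduct.tendsto_nhds_iff]
    simp only [Function.comp_def, Units.embedProduct_apply]
    exact hT1.prodMk_nhds ((MulOpposite.continuous_op.tendsto _).comp hT2)
  have hmem : M ∈ closure (H : Set (GL (Fin d) ℤ_[p])) :=
    mem_closure_of_tendsto hT (Eventually.of_forall hgH)
  rwa [hclosed.closure_eq] at hmem
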